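/- If 𝒯 is identified, then 𝒯 admits fair valuations: for every finite nonempty A ⊆ ℝ^Θ there exists α_A ∈ ℝ^Θ with v_A(t) = ∑_θ α_A(θ)t(θ) for all t ∈ 𝒯. -/

import Mathlib

open MeasureTheory Set

section Defs

variable {Θ : Type*} [Fintype Θ]

/-- The value function `v_A(s) = max_{a ∈ A} ∑_θ a(θ) s(θ)`. -/
noncomputable def valueFn (A : Set (Θ → ℝ)) (s : Θ → ℝ) : ℝ :=
  sSup ((fun a => ∑ θ, a θ * s θ) '' A)

/-- A binary set: one or two elements. -/
def Binary (A : Set (Θ → ℝ)) : Prop := A.ncard = 1 ∨ A.ncard = 2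

/-- An information structure on `S`: a Borel probability measure supported on `S`. -/
def IsInfoStructure (S : Set (Θ → ℝ)) (π : Measure (Θ → ℝ)) : Prop :=
  IsProbabilityMeasure π ∧ π Sᶜ = 0

/-- The skill distribution `p_π(θ) = ∫_S s(θ) dπ(s)` induced by `π`. -/
noncomputable def skillDist (S : Set (Θ → ℝ)) (π : Measure (Θ → ℝ)) : Θ → ℝ :=
  fun θ => ∫ s in S, s θ ∂π

/-- `S` is non-discriminatory. -/
def NonDiscriminatory (S : Set (Θ → ℝ)) : Prop :=
  ∀ π π' : Measure (Θ → ℝ), IsInfoStructure S π → IsInfoStructure S π' →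
    ∀ A : Set (Θ → ℝ), A.Finite → A.Nonempty →
      skillDist S π = skillDist S π' →
      ∫ t in S, valueFn A t ∂π = ∫ t in S, valueFn A t ∂π'

/-- `S` is non-discriminatory for binary sets. -/
def NonDiscriminatoryBinary (S : Set (Θ → ℝ)) : Prop :=
  ∀ π π' : Measure (Θ → ℝ), IsInfoStructure S π → IsInfoStructure S π' →
    ∀ A : Set (Θ → ℝ), Binary A →
      skillDist S π = skillDist S π' →
      ∫ t in S, valueFn A t ∂π = ∫ t in S, valueFn A t ∂π'

/-- `S` is identified. -/
def Identified (S : Set (Θ → ℝ)) : Prop :=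
  ∀ π π' : Measure (Θ → ℝ), IsInfoStructure S π → IsInfoStructure S π' →
    skillDist S π = skillDist S π' → π = π'

/-- `S` admits fair valuations. -/
def FairValuations (S : Set (Θ → ℝ)) : Prop :=
  ∀ A : Set (Θ → ℝ), A.Finite → A.Nonempty →
    ∃ α : Θ → ℝ, ∀ t ∈ S, valueFn A t = ∑ θ, α θ * t θ

/-- `S` admits fair valuations for binary sets. -/
def FairValuationsBinary (S : Set (Θ → ℝ)) : Prop :=
  ∀ A : Set (Θ → ℝ), Binary A →
    ∃ α : Θ → ℝ, ∀ t ∈ S, valueFn A t = ∑ θ, α θ * t θ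

/-- `W_A(p)`: value of optimal information design with skill distribution `p`,
over information structures on `S`. -/
noncomputable def Wfn (A S : Set (Θ → ℝ)) (p : Θ → ℝ) : ℝ :=
  sSup {x | ∃ π : Measure (Θ → ℝ), IsInfoStructure S π ∧ skillDist S π = p ∧
    x = ∫ t in S, valueFn A t ∂π}

/-- A function is affine on `T`. -/
def AffineOnSet (W : (Θ → ℝ) → ℝ) (T : Set (Θ → ℝ)) : Prop :=
  ∀ p ∈ T, ∀ q ∈ T, ∀ γ : ℝ, 0 ≤ γ → γ ≤ 1 →
    W (γ • p + (1 - γ) • q) = γ * W p + (1 - γ) * W q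

end Defs

variable {Θ : Type*} [Fintype Θ] [Nonempty Θ]

section MyAux

variable {Θ : Type*} [Fintype Θ]

noncomputable def wMeas (F : Finset (Θ → ℝ)) (w : (Θ → ℝ) → ℝ) : Measure (Θ → ℝ) :=
  ∑ t ∈ F, ENNReal.ofReal (w t) • Measure.dirac t

lemma wMeas_apply (F : Finset (Θ → ℝ)) (w : (Θ → ℝ) → ℝ) (s : Set (Θ → ℝ)) :
    wMeas F w s = ∑ t ∈ F, ENNReal.ofReal (w t) * Measure.dirac t s := by
  simp [wMeas, Measure.finset_sum_apply, Measure.smul_apply, smul_eq_mul]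

lemma wMeas_prob (F : Finset (Θ → ℝ)) (w : (Θ → ℝ) → ℝ) (hw : ∀ t ∈ F, 0 ≤ w t)
    (hsum : ∑ t ∈ F, w t = 1) : IsProbabilityMeasure (wMeas F w) := by
  constructor
  rw [wMeas_apply]
  simp only [measure_univ, mul_one]
  rw [← ENNReal.ofReal_sum_of_nonneg hw, hsum, ENNReal.ofReal_one]

lemma wMeas_compl (F : Finset (Θ → ℝ)) (w : (Θ → ℝ) → ℝ) (S : Set (Θ → ℝ))
    (hS : MeasurableSet S) (hF : ∀ t ∈ F, t ∈ S) : wMeas F w Sᶜ = 0 := by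
  rw [wMeas_apply]
  refine Finset.sum_eq_zero fun t ht => ?_
  rw [Measure.dirac_apply' _ hS.compl]
  simp [indicator_apply, hF t ht]

lemma wMeas_singleton_zero (F : Finset (Θ → ℝ)) (w : (Θ → ℝ) → ℝ) (t₀ : Θ → ℝ)
    (ht₀ : t₀ ∉ F) : wMeas F w {t₀} = 0 := by
  rw [wMeas_apply]
  refine Finset.sum_eq_zero fun t ht => ?_
  rw [Measure.dirac_apply]
  have : t ≠ t₀ := fun h => ht₀ (h ▸ ht)
  simp [indicator_apply, this]

lemma wMeas_singleton_mem (F : Finset (Θ → ℝ)) (w : (Θ → ℝ) → ℝ) (t₀ : Θ → ℝ)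
    (ht₀ : t₀ ∈ F) : wMeas F w {t₀} = ENNReal.ofReal (w t₀) := by
  rw [wMeas_apply]
  rw [Finset.sum_eq_single_of_mem t₀ ht₀]
  · simp [Measure.dirac_apply]
  · intro t ht hne
    rw [Measure.dirac_apply]
    simp [indicator_apply, hne]

lemma wMeas_setIntegral (F : Finset (Θ → ℝ)) (w : (Θ → ℝ) → ℝ) (S : Set (Θ → ℝ))
    (hw : ∀ t ∈ F, 0 ≤ w t)
    {f : (Θ → ℝ) → ℝ} (hf : StronglyMeasurable f) (hc : wMeas F w Sᶜ = 0) :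
    ∫ s in S, f s ∂(wMeas F w) = ∑ t ∈ F, w t * f t := by
  classical
  have hres : (wMeas F w).restrict S = wMeas F w :=
    Measure.restrict_eq_self_of_ae_mem (by
      rw [ae_iff]
      exact hc)
  show ∫ s, f s ∂((wMeas F w).restrict S) = _
  rw [hres, wMeas]
  rw [integral_finset_sum_measure (fun t _ =>
    (((integrable_const (f t)).congr (ae_eq_dirac f).symm).smul_measure ENNReal.ofReal_ne_top))]
  refine Finset.sum_congr rfl fun t ht => ?_
  rw [integral_smul_measure, integral_dirac' f t hf, ENNReal.toReal_ofReal (hw t ht),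
    smul_eq_mul]


variable [Nonempty Θ]

lemma identified_linearIndependent (𝒯 : Set (Θ → ℝ)) (h𝒯 : 𝒯 ⊆ stdSimplex ℝ Θ)
    (h𝒯c : IsClosed 𝒯) (hid : Identified 𝒯) :
    LinearIndependent ℝ ((↑) : 𝒯 → (Θ → ℝ)) := by
  classical
  rw [linearIndependent_subtype_iff, linearIndepOn_iff]
  intro l hl hsum
  rw [Finsupp.mem_supported] at hl
  rw [Finsupp.linearCombination_apply, Finsupp.sum] at hsum
  -- hsum : ∑ t ∈ l.support, l t • (id t) = 0
  have hcoord : ∀ θ, ∑ t ∈ l.support, l t * t θ = 0 := by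
    intro θ
    have := congrFun hsum θ
    simpa using this
  have hmem : ∀ t ∈ l.support, t ∈ 𝒯 := fun t ht => hl ht
  have hsum1 : ∀ t ∈ l.support, ∑ θ, t θ = 1 := fun t ht => (h𝒯 (hmem t ht)).2
  have hcoeff : ∑ t ∈ l.support, l t = 0 := by
    have : ∑ θ, ∑ t ∈ l.support, l t * t θ = 0 := by
      simp [hcoord]
    rw [Finset.sum_comm] at this
    calc ∑ t ∈ l.support, l t = ∑ t ∈ l.support, l t * ∑ θ, t θ := by
          refine Finset.sum_congr rfl fun t ht => ?_
          rw [hsum1 t ht, mul_one]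
      _ = 0 := by rw [← this]; exact Finset.sum_congr rfl fun t _ => Finset.mul_sum _ _ _
  set P := l.support.filter (fun t => 0 < l t) with hP
  set N := l.support.filter (fun t => l t < 0) with hN
  have hPN : ∀ t ∈ l.support, t ∈ P ∨ t ∈ N := by
    intro t ht
    rcases lt_or_gt_of_ne (Finsupp.mem_support_iff.mp ht) with h | h
    · exact Or.inr (Finset.mem_filter.mpr ⟨ht, h⟩)
    · exact Or.inl (Finset.mem_filter.mpr ⟨ht, h⟩)
  have hPempty : P = ∅ := by
    by_contra hPne
    obtain ⟨t₀, ht₀⟩ := Finset.nonempty_iff_ne_empty.mpr hPne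
    set C := ∑ t ∈ P, l t with hC
    have hCpos : 0 < C := Finset.sum_pos (fun t ht => (Finset.mem_filter.mp ht).2) ⟨t₀, ht₀⟩
    -- N sum is -C
    have hsplit : ∑ t ∈ P, l t + ∑ t ∈ N, l t = 0 := by
      rw [← Finset.sum_union (by
        rw [Finset.disjoint_filter]
        intro t _ h1 h2
        exact absurd h1 (not_lt.mpr h2.le))]
      rw [← hcoeff]
      apply Finset.sum_congr _ (fun _ _ => rfl)
      apply Finset.Subset.antisymm
      · exact Finset.union_subset (Finset.filter_subset _ _) (Finset.filter_subset _ _)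
      · intro t ht
        rcases hPN t ht with h | h
        · exact Finset.mem_union_left _ h
        · exact Finset.mem_union_right _ h
    -- define the two measures
    set wP : (Θ → ℝ) → ℝ := fun t => l t / C with hwP
    set wN : (Θ → ℝ) → ℝ := fun t => -l t / C with hwN
    have hwPpos : ∀ t ∈ P, 0 ≤ wP t := fun t ht =>
      div_nonneg (Finset.mem_filter.mp ht).2.le hCpos.le
    have hwNpos : ∀ t ∈ N, 0 ≤ wN t := fun t ht =>
      div_nonneg (neg_nonneg.mpr (Finset.mem_filter.mp ht).2.le) hCpos.le
    have hπprob : IsProbabilityMeasure (wMeas P wP) := by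
      refine wMeas_prob _ _ hwPpos ?_
      rw [← Finset.sum_div, ← hC, div_self hCpos.ne']
    have hπ'prob : IsProbabilityMeasure (wMeas N wN) := by
      refine wMeas_prob _ _ hwNpos ?_
      rw [← Finset.sum_div]
      rw [Finset.sum_neg_distrib]
      have : ∑ t ∈ N, l t = -C := by linarith
      rw [this, neg_neg, div_self hCpos.ne']
    have hπc : wMeas P wP 𝒯ᶜ = 0 :=
      wMeas_compl _ _ _ h𝒯c.measurableSet
        (fun t ht => hmem t (Finset.mem_of_mem_filter t ht))
    have hπ'c : wMeas N wN 𝒯ᶜ = 0 :=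
      wMeas_compl _ _ _ h𝒯c.measurableSet
        (fun t ht => hmem t (Finset.mem_of_mem_filter t ht))
    have hskill : skillDist 𝒯 (wMeas P wP) = skillDist 𝒯 (wMeas N wN) := by
      funext θ
      unfold skillDist
      rw [wMeas_setIntegral _ _ _ hwPpos ((measurable_pi_apply θ).stronglyMeasurable) hπc,
        wMeas_setIntegral _ _ _ hwNpos ((measurable_pi_apply θ).stronglyMeasurable) hπ'c]
      have key : ∑ t ∈ P, l t * t θ + ∑ t ∈ N, l t * t θ = 0 := by
        rw [← Finset.sum_union (by
          rw [Finset.disjoint_filter]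
          intro t _ h1 h2
          exact absurd h1 (not_lt.mpr h2.le))]
        rw [← hcoord θ]
        apply Finset.sum_congr _ (fun _ _ => rfl)
        apply Finset.Subset.antisymm
        · exact Finset.union_subset (Finset.filter_subset _ _) (Finset.filter_subset _ _)
        · intro t ht
          rcases hPN t ht with h | h
          · exact Finset.mem_union_left _ h
          · exact Finset.mem_union_right _ h
      have hPθ : ∑ t ∈ P, wP t * t θ = (∑ t ∈ P, l t * t θ) / C := by
        rw [Finset.sum_div]
        exact Finset.sum_congr rfl fun t _ => by rw [hwP]; ring
      have hNθ : ∑ t ∈ N, wN t * t θ = -(∑ t ∈ N, l t * t θ) / C := by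
        rw [neg_div, Finset.sum_div, ← Finset.sum_neg_distrib]
        exact Finset.sum_congr rfl fun t _ => by rw [hwN]; ring
      rw [hPθ, hNθ]
      congr 1
      linarith
    have heq := hid _ _ ⟨hπprob, hπc⟩ ⟨hπ'prob, hπ'c⟩ hskill
    have h1 : wMeas P wP {t₀} = ENNReal.ofReal (wP t₀) := wMeas_singleton_mem _ _ _ ht₀
    have h2 : wMeas N wN {t₀} = 0 := by
      refine wMeas_singleton_zero _ _ _ ?_
      intro h
      exact absurd (Finset.mem_filter.mp ht₀).2 (not_lt.mpr (Finset.mem_filter.mp h).2.le)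
    rw [heq, h2] at h1
    have : 0 < wP t₀ := div_pos (Finset.mem_filter.mp ht₀).2 hCpos
    exact absurd h1.symm (ne_of_gt (ENNReal.ofReal_pos.mpr this))
  -- P empty: all coefficients nonpositive; then N sum = 0 with negative terms → N empty
  have hNempty : N = ∅ := by
    by_contra hNne
    obtain ⟨t₀, ht₀⟩ := Finset.nonempty_iff_ne_empty.mpr hNne
    have hNsum : ∑ t ∈ N, l t = 0 := by
      have : ∀ t ∈ l.support, t ∈ N := by
        intro t ht
        rcases hPN t ht with h | h
        · rw [hPempty] at h; exact absurd h (Finset.notMem_empty t)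
        · exact h
      rw [← hcoeff]
      exact Finset.sum_subset (Finset.filter_subset _ _)
        (fun t ht htN => absurd (this t ht) htN)
    have : ∑ t ∈ N, l t < 0 := Finset.sum_neg (fun t ht => (Finset.mem_filter.mp ht).2) ⟨t₀, ht₀⟩
    linarith
  ext t
  by_contra h
  have ht : t ∈ l.support := Finsupp.mem_support_iff.mpr h
  rcases hPN t ht with hh | hh
  · rw [hPempty] at hh; exact Finset.notMem_empty t hh
  · rw [hNempty] at hh; exact Finset.notMem_empty t hh

end MyAux

theorem stmt5 (𝒯 : Set (Θ → ℝ)) (h𝒯 : 𝒯 ⊆ stdSimplex ℝ Θ) (h𝒯c : IsClosed 𝒯)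
    (hid : Identified 𝒯) : FairValuations 𝒯 := by
  intro A _ _
  have hli := identified_linearIndependent 𝒯 h𝒯 h𝒯c hid
  rw [linearIndependent_subtype_iff] at hli
  set f := valueFn A with hf
  classical
  let B := Module.Basis.extend hli
  let G : (Θ → ℝ) →ₗ[ℝ] ℝ :=
    B.constr ℝ (fun x => if (x : Θ → ℝ) ∈ 𝒯 then f x else 0)
  refine ⟨fun θ => G (Pi.single θ 1), fun t ht => ?_⟩
  have hG : G t = f t := by
    have ht' : t ∈ hli.extend (Set.subset_univ 𝒯) := hli.subset_extend _ ht
    have hB : B ⟨t, ht'⟩ = t := Module.Basis.extend_apply_self hli ⟨t, ht'⟩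
    calc G t = G (B ⟨t, ht'⟩) := by rw [hB]
      _ = if t ∈ 𝒯 then f t else 0 := B.constr_basis ℝ _ _
      _ = f t := if_pos ht
  rw [← hG]
  have ht2 : t = ∑ θ, t θ • (Pi.single θ 1 : Θ → ℝ) := by
    funext j
    simp [Finset.sum_apply, Pi.single_apply]
  conv_lhs => rw [ht2]
  rw [map_sum]
  refine Finset.sum_congr rfl fun θ _ => ?_
  rw [LinearMap.map_smul, smul_eq_mul, mul_comm]
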